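/- Assume B(z) is constant with value B and φ is a gauge function. For m, n ∈ ℕ let ψ_n(w) = w^n·e^{−B|w|²−iφ(w)} and let Ã be the creation operator (Ãf)(z) = −(∂f/∂z)(z) + conj(S(z))·f(z). Then for every z ∈ ℂ, (Ã^m ψ_n)(z) = (−1)^m·e^{−B|z|²−iφ(z)}·H_{m,n}(z), where H_{m,n}(z) = e^{2B|z|²}·(∂^m/∂z^m)[w ↦ w^n·e^{−2B|w|²}](z) is the complex Hermite polynomial and ∂^m/∂z^m denotes the m-fold iterated Wirtinger derivative. -/

import Mathlib

noncomputable section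

open Complex

/-- The group `G = 𝕋 ⋉ ℂ`, with elements `[a,b]`, acting on `ℂ` by `z ↦ a z + b`. -/
@[ext]
structure GT : Type where
  a : Circle
  b : ℂ

namespace GT

instance : Group GT where
  mul g h := ⟨g.a * h.a, (g.a : ℂ) * h.b + g.b⟩
  one := ⟨1, 0⟩
  inv g := ⟨g.a⁻¹, -((g.a⁻¹ : ℂ) * g.b)⟩
  mul_assoc g h k := by
    refine GT.ext (mul_assoc _ _ _) ?_
    show ((g.a * h.a : Circle) : ℂ) * k.b + ((g.a : ℂ) * h.b + g.b)
        = (g.a : ℂ) * ((h.a : ℂ) * k.b + h.b) + g.b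
    push_cast; ring
  one_mul g := by
    refine GT.ext (one_mul _) ?_
    show ((1 : Circle) : ℂ) * g.b + 0 = g.b
    simp
  mul_one g := by
    refine GT.ext (mul_one _) ?_
    show (g.a : ℂ) * 0 + g.b = g.b
    simp
  inv_mul_cancel g := by
    refine GT.ext (inv_mul_cancel _) ?_
    show ((g.a⁻¹ : Circle) : ℂ) * g.b + -(((g.a : ℂ))⁻¹ * g.b) = 0
    push_cast; ring

/-- The action of `G` on `ℂ` : `[a,b]·z = a z + b`. -/
def act (g : GT) (z : ℂ) : ℂ := (g.a : ℂ) * z + g.b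

end GT

/-- The Hermitian product `⟨z,w⟩ = z·conj w`. -/
def herm (z w : ℂ) : ℂ := z * (starRingEnd ℂ) w

/-- The automorphic factor `j^α(g,z) = exp(2 i α Im⟨z, g⁻¹·0⟩)`. -/
def jfac (α : ℝ) (g : GT) (z : ℂ) : ℂ :=
  Complex.exp (2 * Complex.I * (α : ℂ) * ((herm z (GT.act g⁻¹ 0)).im : ℂ))

/-- The Wirtinger derivative `∂f/∂z = (1/2)(∂f/∂x − i ∂f/∂y)`. -/
def wderiv (f : ℂ → ℂ) (z : ℂ) : ℂ :=
  (1 / 2 : ℂ) * (fderiv ℝ f z 1 - Complex.I * fderiv ℝ f z Complex.I)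

/-- The anti-Wirtinger derivative `∂f/∂z̄ = (1/2)(∂f/∂x + i ∂f/∂y)`. -/
def wderivBar (f : ℂ → ℂ) (z : ℂ) : ℂ :=
  (1 / 2 : ℂ) * (fderiv ℝ f z 1 + Complex.I * fderiv ℝ f z Complex.I)

/-- The Euclidean Laplacian `Δ = 4 ∂²/∂z∂z̄`. -/
def lap (f : ℂ → ℂ) (z : ℂ) : ℂ := 4 * wderiv (fun w => wderivBar f w) z

/-- `S(z) = ν z + μ (τ(z)·∂τ̄/∂z̄(z) − τ̄(z)·∂τ/∂z̄(z))`. -/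
def Sfun (ν μ : ℝ) (τ : ℂ → ℂ) (z : ℂ) : ℂ :=
  (ν : ℂ) * z + (μ : ℂ) *
    (τ z * wderivBar (fun w => (starRingEnd ℂ) (τ w)) z - (starRingEnd ℂ) (τ z) * wderivBar τ z)

/-- `B(z) = ν + μ(|∂τ/∂z(z)|² − |∂τ/∂z̄(z)|²)`. -/
def Bfun (ν μ : ℝ) (τ : ℂ → ℂ) (z : ℂ) : ℝ :=
  ν + μ * (‖wderiv τ z‖ ^ 2 - ‖wderivBar τ z‖ ^ 2)

/-- The magnetic Schrödinger operator `L`. -/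
def Lop (ν μ : ℝ) (τ : ℂ → ℂ) (f : ℂ → ℂ) (z : ℂ) : ℂ :=
  - wderiv (fun w => wderivBar f w) z
    - (Sfun ν μ τ z * wderiv f z - (starRingEnd ℂ) (Sfun ν μ τ z) * wderivBar f z)
    + ((‖Sfun ν μ τ z‖ : ℂ)) ^ 2 * f z
    - ((μ : ℂ) / 4) *
        (τ z * lap (fun w => (starRingEnd ℂ) (τ w)) z - (starRingEnd ℂ) (τ z) * lap τ z) * f z

/-- The annihilation operator `A f = ∂f/∂z̄ + S f`. -/
def Aop (ν μ : ℝ) (τ : ℂ → ℂ) (f : ℂ → ℂ) (z : ℂ) : ℂ :=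
  wderivBar f z + Sfun ν μ τ z * f z

/-- The creation operator `Ã f = −∂f/∂z + conj(S) f`. -/
def Atop (ν μ : ℝ) (τ : ℂ → ℂ) (f : ℂ → ℂ) (z : ℂ) : ℂ :=
  - wderiv f z + (starRingEnd ℂ) (Sfun ν μ τ z) * f z

/-- `J(g,z) = j^ν(g,z)·j^μ(ρ(g),τ(z))`. -/
def Jfun (ν μ : ℝ) (ρ : GT → GT) (τ : ℂ → ℂ) (g : GT) (z : ℂ) : ℂ :=
  jfac ν g z * jfac μ (ρ g) (τ z)

/-- `φ_ρ(g,g') = Im(ν⟨g⁻¹·0,g'·0⟩ + μ⟨ρ(g⁻¹)·0, ρ(g')·0⟩)`. -/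
def phiRho (ν μ : ℝ) (ρ : GT → GT) (g g' : GT) : ℝ :=
  ((ν : ℂ) * herm (GT.act g⁻¹ 0) (GT.act g' 0)
    + (μ : ℂ) * herm (GT.act (ρ g⁻¹) 0) (GT.act (ρ g') 0)).im

/-- Membership in the lattice `Γ = ℤω₁ + ℤω₂`. -/
def inLattice (ω₁ ω₂ : ℂ) (γ : ℂ) : Prop := ∃ m n : ℤ, γ = (m : ℂ) * ω₁ + (n : ℂ) * ω₂

/-- Mixed `Γ`-automorphic form of type `(ν,μ)` w.r.t. the pair `(ρ,τ)`. -/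
def MixedForm (ν μ : ℝ) (ρ : GT → GT) (τ : ℂ → ℂ) (ω₁ ω₂ : ℂ) (F : ℂ → ℂ) : Prop :=
  ContDiff ℝ (⊤ : ℕ∞) F ∧ ∀ γ : ℂ, inLattice ω₁ ω₂ γ → ∀ z : ℂ,
    F (z + γ) = jfac (-ν) ⟨(1 : Circle), γ⟩ z * jfac (-μ) (ρ ⟨(1 : Circle), γ⟩) (τ z) * F z

/-- The Laguerre polynomial `L_k`. -/
def laguerre (k : ℕ) (x : ℝ) : ℝ :=
  ∑ j ∈ Finset.range (k + 1), (-1) ^ j * (k.choose j : ℝ) * x ^ j / (Nat.factorial j : ℝ)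


/-- The multiplier `χ_τ(γ) = exp(iφ(γ) − 2iμ Im⟨τ(0), ρ([1,γ])⁻¹·0⟩)`. -/
def chiTau (μ : ℝ) (ρ : GT → GT) (τ : ℂ → ℂ) (φ : ℂ → ℝ) (γ : ℂ) : ℂ :=
  Complex.exp (Complex.I * (φ γ : ℂ)
    - 2 * Complex.I * (μ : ℂ) * ((herm (τ 0) (GT.act (ρ ⟨1, γ⟩)⁻¹ 0)).im : ℂ))

/-- The eigenprojector kernel `K_k`. -/
def Kker (B : ℝ) (φ : ℂ → ℝ) (k : ℕ) (z w : ℂ) : ℂ :=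
  ((2 * B / Real.pi : ℝ) : ℂ) * Complex.exp (-Complex.I * ((φ z - φ w : ℝ) : ℂ)) *
    Complex.exp (2 * Complex.I * (B : ℂ) * ((herm z w).im : ℂ)) *
    Complex.exp (-((B * ‖z - w‖ ^ 2 : ℝ) : ℂ)) *
    ((laguerre k (2 * B * ‖z - w‖ ^ 2) : ℝ) : ℂ)

/-- The kernel `K^σ_ξ;k`. -/
def Kxi (σ : ℝ) (ξ : ℂ) (k : ℕ) (z w : ℂ) : ℂ :=
  ((2 * σ / Real.pi : ℝ) : ℂ) * Complex.exp (2 * Complex.I * ((herm (z - w) ξ).im : ℂ)) *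
    Complex.exp (2 * Complex.I * (σ : ℂ) * ((herm z w).im : ℂ)) *
    Complex.exp (-((σ * ‖z - w‖ ^ 2 : ℝ) : ℂ)) *
    ((laguerre k (2 * σ * ‖z - w‖ ^ 2) : ℝ) : ℂ)

/-- `m`-fold iterate of the creation operator `Ã`. -/
def AtopIter (ν μ : ℝ) (τ : ℂ → ℂ) (m : ℕ) (f : ℂ → ℂ) : ℂ → ℂ :=
  (fun u z => Atop ν μ τ u z)^[m] f

lemma wd_mul {f g : ℂ → ℂ} {z : ℂ} (hf : DifferentiableAt ℝ f z) (hg : DifferentiableAt ℝ g z) :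
    wderiv (fun w => f w * g w) z = f z * wderiv g z + wderiv f z * g z := by
  unfold wderiv
  rw [fderiv_fun_mul hf hg]
  simp only [ContinuousLinearMap.add_apply, ContinuousLinearMap.smul_apply, smul_eq_mul]
  ring

lemma wd_const_mul (c : ℂ) {f : ℂ → ℂ} {z : ℂ} (hf : DifferentiableAt ℝ f z) :
    wderiv (fun w => c * f w) z = c * wderiv f z := by
  unfold wderiv
  rw [fderiv_const_mul hf]
  simp only [ContinuousLinearMap.smul_apply, smul_eq_mul]
  ring

lemma wd_sub {f g : ℂ → ℂ} {z : ℂ} (hf : DifferentiableAt ℝ f z) (hg : DifferentiableAt ℝ g z) :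
    wderiv (fun w => f w - g w) z = wderiv f z - wderiv g z := by
  unfold wderiv
  rw [fderiv_fun_sub hf hg]
  simp only [ContinuousLinearMap.sub_apply]
  ring

lemma wd_exp {f : ℂ → ℂ} {z : ℂ} (hf : DifferentiableAt ℝ f z) :
    wderiv (fun w => Complex.exp (f w)) z = Complex.exp (f z) * wderiv f z := by
  unfold wderiv
  rw [(hf.hasFDerivAt.cexp).fderiv]
  simp only [ContinuousLinearMap.smul_apply, smul_eq_mul]
  ring

lemma wd_id (z : ℂ) : wderiv (fun w => w) z = 1 := by
  unfold wderiv
  rw [fderiv_id']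
  simp only [ContinuousLinearMap.coe_id', id_eq]
  rw [Complex.I_mul_I]
  ring

lemma wd_conj_id (z : ℂ) : wderiv (fun w => (starRingEnd ℂ) w) z = 0 := by
  unfold wderiv
  have : fderiv ℝ (fun w => (starRingEnd ℂ) w) z = Complex.conjCLE.toContinuousLinearMap := by
    exact (Complex.conjCLE.toContinuousLinearMap.hasFDerivAt).fderiv
  rw [this]
  simp only [ContinuousLinearEquiv.coe_coe, Complex.conjCLE_apply, map_one, Complex.conj_I]
  ring_nf
  rw [Complex.I_sq]
  ring

lemma diff_conj (z : ℂ) : DifferentiableAt ℝ (fun w : ℂ => (starRingEnd ℂ) w) z := by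
  exact (Complex.conjCLE.differentiable.differentiableAt)

lemma wd_mul_conj (z : ℂ) : wderiv (fun w => w * (starRingEnd ℂ) w) z = (starRingEnd ℂ) z := by
  rw [wd_mul differentiableAt_fun_id (diff_conj z), wd_id, wd_conj_id]
  ring

lemma contDiff_wderiv {f : ℂ → ℂ} (hf : ContDiff ℝ (⊤:ℕ∞) f) : ContDiff ℝ (⊤:ℕ∞) (wderiv f) := by
  unfold wderiv
  have h1 : ContDiff ℝ (⊤:ℕ∞) (fderiv ℝ f) := hf.fderiv_right (by exact_mod_cast le_top)
  exact contDiff_const.mul ((h1.clm_apply contDiff_const).sub (contDiff_const.mul (h1.clm_apply contDiff_const)))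

lemma cast_abs_sq (c : ℝ) (w : ℂ) :
    ((c * ‖w‖ ^ 2 : ℝ) : ℂ) = (c : ℂ) * (w * (starRingEnd ℂ) w) := by
  rw [Complex.mul_conj, Complex.ofReal_mul, ← Complex.sq_norm, Complex.ofReal_pow]

-- wderiv of a real-valued function is conj of its wderivBar
lemma wd_real (φ : ℂ → ℝ) (z : ℂ) (hφ : DifferentiableAt ℝ φ z) :
    wderiv (fun w => ((φ w : ℝ) : ℂ)) z
      = (starRingEnd ℂ) (wderivBar (fun w => ((φ w : ℝ) : ℂ)) z) := by
  have hc : fderiv ℝ (fun w => ((φ w : ℝ) : ℂ)) z = Complex.ofRealCLM.comp (fderiv ℝ φ z) := by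
    rw [show (fun w => ((φ w : ℝ) : ℂ)) = Complex.ofRealCLM ∘ φ from rfl]
    rw [fderiv_comp z Complex.ofRealCLM.differentiable.differentiableAt hφ,
      ContinuousLinearMap.fderiv]
  unfold wderiv wderivBar
  rw [hc]
  simp only [ContinuousLinearMap.coe_comp', Function.comp_apply, Complex.ofRealCLM_apply,
    map_mul, map_add, map_sub, Complex.conj_ofReal, Complex.conj_I, map_div₀, map_one,
    map_ofNat]
  ring

lemma contDiff_ofReal_comp {φ : ℂ → ℝ} (h : ContDiff ℝ (⊤:ℕ∞) φ) :
    ContDiff ℝ (⊤:ℕ∞) (fun w => ((φ w : ℝ) : ℂ)) :=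
  Complex.ofRealCLM.contDiff.comp h

lemma contDiff_wderiv_iter {f : ℂ → ℂ} (hf : ContDiff ℝ (⊤:ℕ∞) f) (m : ℕ) :
    ContDiff ℝ (⊤:ℕ∞) (wderiv^[m] f) := by
  induction m with
  | zero => exact hf
  | succ m ih => rw [Function.iterate_succ_apply']; exact contDiff_wderiv ih

lemma contDiff_conj : ContDiff ℝ (⊤:ℕ∞) (fun w : ℂ => (starRingEnd ℂ) w) := by
  have : (fun w : ℂ => (starRingEnd ℂ) w) = ⇑(Complex.conjCLE.toContinuousLinearMap) := by
    funext w; rfl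
  rw [this]
  exact Complex.conjCLE.toContinuousLinearMap.contDiff

lemma contDiff_q : ContDiff ℝ (⊤:ℕ∞) (fun w : ℂ => w * (starRingEnd ℂ) w) :=
  contDiff_id.mul contDiff_conj

lemma contDiff_E (B : ℝ) (φ : ℂ → ℝ) (hφs : ContDiff ℝ (⊤:ℕ∞) φ) :
    ContDiff ℝ (⊤:ℕ∞) (fun w =>
      Complex.exp (-((B * ‖w‖ ^ 2 : ℝ) : ℂ) - Complex.I * (φ w : ℂ))) := by
  apply Complex.contDiff_exp.comp
  have : (fun w : ℂ => -((B * ‖w‖ ^ 2 : ℝ) : ℂ) - Complex.I * (φ w : ℂ))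
      = fun w : ℂ => -((B:ℂ) * (w * (starRingEnd ℂ) w)) - Complex.I * (φ w : ℂ) := by
    funext w; rw [cast_abs_sq]
  rw [this]
  exact ((contDiff_const.mul contDiff_q).neg).sub
    (contDiff_const.mul (contDiff_ofReal_comp hφs))

lemma wd_E (B : ℝ) (ν μ : ℝ) (τ : ℂ → ℂ) (φ : ℂ → ℝ) (hφs : ContDiff ℝ (⊤:ℕ∞) φ)
    (hφ : ∀ z : ℂ, wderivBar (fun w => (φ w : ℂ)) z = -Complex.I * (Sfun ν μ τ z - (B : ℂ) * z))
    (z : ℂ) :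
    wderiv (fun w => Complex.exp (-((B * ‖w‖ ^ 2 : ℝ) : ℂ) - Complex.I * (φ w : ℂ))) z
      = Complex.exp (-((B * ‖z‖ ^ 2 : ℝ) : ℂ) - Complex.I * (φ z : ℂ)) *
        ((starRingEnd ℂ) (Sfun ν μ τ z) - 2 * (B:ℂ) * (starRingEnd ℂ) z) := by
  have hrw : (fun w : ℂ => -((B * ‖w‖ ^ 2 : ℝ) : ℂ) - Complex.I * (φ w : ℂ))
      = fun w : ℂ => (-(B:ℂ)) * (w * (starRingEnd ℂ) w) - Complex.I * (φ w : ℂ) := by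
    funext w; rw [cast_abs_sq]; ring
  have hrw2 : (fun w : ℂ =>
      Complex.exp (-((B * ‖w‖ ^ 2 : ℝ) : ℂ) - Complex.I * (φ w : ℂ)))
      = fun w : ℂ =>
        Complex.exp ((-(B:ℂ)) * (w * (starRingEnd ℂ) w) - Complex.I * (φ w : ℂ)) := by
    funext w; congr 1; rw [cast_abs_sq]; ring
  have hq := contDiff_q.differentiable (by simp)
  have hφℂ := (contDiff_ofReal_comp hφs).differentiable (by simp)
  have he : DifferentiableAt ℝ
      (fun w : ℂ => (-(B:ℂ)) * (w * (starRingEnd ℂ) w) - Complex.I * (φ w : ℂ)) z :=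
    ((hq z).const_mul _).sub ((hφℂ z).const_mul _)
  rw [hrw2, wd_exp he, wd_sub ((hq z).const_mul _) ((hφℂ z).const_mul _),
    wd_const_mul _ (hq z), wd_const_mul _ (hφℂ z), wd_mul_conj,
    wd_real φ z (hφs.differentiable (by simp) z), hφ z]
  rw [show (-((B * ‖z‖ ^ 2 : ℝ) : ℂ) - Complex.I * (φ z : ℂ))
      = ((-(B:ℂ)) * (z * (starRingEnd ℂ) z) - Complex.I * (φ z : ℂ)) by rw [cast_abs_sq]; ring]
  congr 1
  simp only [map_mul, map_sub, map_neg, Complex.conj_I, Complex.conj_ofReal]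
  linear_combination (-((starRingEnd ℂ) (Sfun ν μ τ z) - (B:ℂ) * (starRingEnd ℂ) z)) *
    Complex.I_sq

lemma step1 (ν μ B : ℝ) (τ : ℂ → ℂ) (φ : ℂ → ℝ) (hφs : ContDiff ℝ (⊤:ℕ∞) φ)
    (hφ : ∀ z : ℂ, wderivBar (fun w => (φ w : ℂ)) z = -Complex.I * (Sfun ν μ τ z - (B : ℂ) * z))
    (h : ℂ → ℂ) (hh : ContDiff ℝ (⊤:ℕ∞) h) (z : ℂ) :
    Atop ν μ τ (fun w =>
        Complex.exp (-((B * ‖w‖ ^ 2 : ℝ) : ℂ) - Complex.I * (φ w : ℂ)) * h w) z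
      = Complex.exp (-((B * ‖z‖ ^ 2 : ℝ) : ℂ) - Complex.I * (φ z : ℂ)) *
        (- wderiv h z + 2 * (B:ℂ) * (starRingEnd ℂ) z * h z) := by
  have hE := contDiff_E B φ hφs
  unfold Atop
  rw [wd_mul (hE.differentiable (by simp) z)
    (hh.differentiable (by simp) z), wd_E B ν μ τ φ hφs hφ z]
  ring

lemma exp_cancel (c : ℝ) (z : ℂ) :
    Complex.exp ((c * ‖z‖ ^ 2 : ℝ) : ℂ) *
      Complex.exp (-((c * ‖z‖ ^ 2 : ℝ) : ℂ)) = 1 := by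
  rw [← Complex.exp_add]; simp

lemma contDiff_G (c : ℝ) :
    ContDiff ℝ (⊤:ℕ∞) (fun w : ℂ => Complex.exp (-((c * ‖w‖ ^ 2 : ℝ) : ℂ))) := by
  have : (fun w : ℂ => Complex.exp (-((c * ‖w‖ ^ 2 : ℝ) : ℂ)))
      = fun w : ℂ => Complex.exp ((-(c:ℂ)) * (w * (starRingEnd ℂ) w)) := by
    funext w; congr 1; rw [cast_abs_sq]; ring
  rw [this]
  exact Complex.contDiff_exp.comp (contDiff_const.mul contDiff_q)

lemma contDiff_Gpos (c : ℝ) :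
    ContDiff ℝ (⊤:ℕ∞) (fun w : ℂ => Complex.exp (((c * ‖w‖ ^ 2 : ℝ) : ℂ))) := by
  have : (fun w : ℂ => Complex.exp (((c * ‖w‖ ^ 2 : ℝ) : ℂ)))
      = fun w : ℂ => Complex.exp (((c:ℂ)) * (w * (starRingEnd ℂ) w)) := by
    funext w; congr 1; rw [cast_abs_sq]
  rw [this]
  exact Complex.contDiff_exp.comp (contDiff_const.mul contDiff_q)

lemma step2 (B : ℝ) (h : ℂ → ℂ) (z : ℂ) (hh : DifferentiableAt ℝ h z) :
    Complex.exp ((2 * B * ‖z‖ ^ 2 : ℝ) : ℂ) *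
      wderiv (fun w => Complex.exp (-((2 * B * ‖w‖ ^ 2 : ℝ) : ℂ)) * h w) z
    = wderiv h z - 2 * (B:ℂ) * (starRingEnd ℂ) z * h z := by
  have hq := contDiff_q.differentiable (by simp)
  have hrw : (fun w : ℂ => Complex.exp (-((2 * B * ‖w‖ ^ 2 : ℝ) : ℂ)) * h w)
      = fun w : ℂ => Complex.exp ((-((2*B : ℝ):ℂ)) * (w * (starRingEnd ℂ) w)) * h w := by
    funext w
    rw [show (-((2 * B * ‖w‖ ^ 2 : ℝ) : ℂ))
      = (-((2*B : ℝ):ℂ)) * (w * (starRingEnd ℂ) w) by rw [cast_abs_sq]; ring]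
  have hGd : DifferentiableAt ℝ
      (fun w : ℂ => Complex.exp ((-((2*B : ℝ):ℂ)) * (w * (starRingEnd ℂ) w))) z := by
    exact ((hq z).const_mul _).cexp
  rw [hrw, wd_mul hGd hh, wd_exp ((hq z).const_mul _), wd_const_mul _ (hq z), wd_mul_conj]
  have hback : ((-((2*B : ℝ):ℂ)) * (z * (starRingEnd ℂ) z))
      = -((2 * B * ‖z‖ ^ 2 : ℝ) : ℂ) := by rw [cast_abs_sq]; ring
  rw [hback]
  have hc := exp_cancel (2*B) z
  push_cast at hc ⊢
  linear_combination (wderiv h z - 2 * (B:ℂ) * (starRingEnd ℂ) z * h z) * hc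

theorem statement18 (ν μ : ℝ) (hν : 0 < ν) (hμ : 0 < μ) (τ : ℂ → ℂ) (hτ : ContDiff ℝ (⊤ : ℕ∞) τ)
    (B : ℝ) (hB : ∀ z : ℂ, Bfun ν μ τ z = B)
    (φ : ℂ → ℝ) (hφs : ContDiff ℝ (⊤ : ℕ∞) φ) (hφ0 : φ 0 = 0)
    (hφ : ∀ z : ℂ, wderivBar (fun w => (φ w : ℂ)) z = -Complex.I * (Sfun ν μ τ z - (B : ℂ) * z))
    (m n : ℕ) (z : ℂ) :
    AtopIter ν μ τ m (fun w => w ^ n * Complex.exp (-((B * ‖w‖ ^ 2 : ℝ) : ℂ) - Complex.I * (φ w : ℂ))) z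
      = (-1 : ℂ) ^ m *
          Complex.exp (-((B * ‖z‖ ^ 2 : ℝ) : ℂ) - Complex.I * (φ z : ℂ)) *
          (Complex.exp ((2 * B * ‖z‖ ^ 2 : ℝ) : ℂ) *
            (wderiv^[m] (fun w => w ^ n * Complex.exp (-((2 * B * ‖w‖ ^ 2 : ℝ) : ℂ))) z)) := by

  set g : ℂ → ℂ := fun w => w ^ n * Complex.exp (-((2 * B * ‖w‖ ^ 2 : ℝ) : ℂ)) with hg_def
  have hg : ContDiff ℝ (⊤:ℕ∞) g := (contDiff_id.pow n).mul (contDiff_G (2*B))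
  induction m generalizing z with
  | zero =>
    simp only [AtopIter, Function.iterate_zero, id_eq, pow_zero, one_mul, hg_def]
    have hc := exp_cancel (2*B) z
    push_cast at hc ⊢
    linear_combination (-(z ^ n *
      Complex.exp (-((B:ℂ) * ‖z‖ ^ 2) - Complex.I * (φ z : ℂ)))) * hc
  | succ m ih =>
    have hum : ContDiff ℝ (⊤:ℕ∞) (wderiv^[m] g) := contDiff_wderiv_iter hg m
    set Hm : ℂ → ℂ := fun w => (-1:ℂ)^m *
      (Complex.exp ((2 * B * ‖w‖ ^ 2 : ℝ) : ℂ) * wderiv^[m] g w) with hHm_def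
    have hHm : ContDiff ℝ (⊤:ℕ∞) Hm :=
      contDiff_const.mul ((contDiff_Gpos (2*B)).mul hum)
    have hstep : AtopIter ν μ τ (m+1)
        (fun w => w ^ n * Complex.exp (-((B * ‖w‖ ^ 2 : ℝ) : ℂ) - Complex.I * (φ w : ℂ))) z
        = Atop ν μ τ (AtopIter ν μ τ m
          (fun w => w ^ n * Complex.exp (-((B * ‖w‖ ^ 2 : ℝ) : ℂ) - Complex.I * (φ w : ℂ)))) z := by
      unfold AtopIter
      rw [Function.iterate_succ_apply']
    have hfun : AtopIter ν μ τ m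
        (fun w => w ^ n * Complex.exp (-((B * ‖w‖ ^ 2 : ℝ) : ℂ) - Complex.I * (φ w : ℂ)))
        = fun w => Complex.exp (-((B * ‖w‖ ^ 2 : ℝ) : ℂ) - Complex.I * (φ w : ℂ)) * Hm w := by
      funext w
      rw [ih w]
      simp only [hHm_def]
      ring
    rw [hstep, hfun, step1 ν μ B τ φ hφs hφ Hm hHm z]
    have h2 := step2 B Hm z (hHm.differentiable (by simp) z)
    have h3 : (fun w => Complex.exp (-((2 * B * ‖w‖ ^ 2 : ℝ) : ℂ)) * Hm w)
        = fun w => ((-1:ℂ))^m * wderiv^[m] g w := by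
      funext w
      simp only [hHm_def]
      have hcw := exp_cancel (2*B) w
      linear_combination ((-1:ℂ))^m * wderiv^[m] g w * hcw
    have h4 : wderiv (fun w => ((-1:ℂ))^m * wderiv^[m] g w) z
        = (-1:ℂ)^m * wderiv^[m+1] g z := by
      rw [wd_const_mul _ (hum.differentiable (by simp) z),
        Function.iterate_succ_apply']
    rw [h3, h4] at h2
    simp only [hHm_def]
    linear_combination (Complex.exp (-((B * ‖z‖ ^ 2 : ℝ) : ℂ) - Complex.I * (φ z : ℂ))) * h2
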